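/- For the planar reflecting Dirichlet random flight (d = 2, h = 1) with n changes of direction and t > R/c, the distance distribution function satisfies P_n{D₂*(t) < r} = 1 − (1 − r²/(ct)²)^{n/2} + (1 − R⁴/(ctr)²)^{n/2}·𝟙_{(R²/(ct), R]}(r) for r ∈ (0, R]. Equivalently: the integral of the radial density q*_{n,2,1}(s,t) = n/(ct)²·[ s(1 − s²/(ct)²)^{n/2−1}·𝟙_{(0,R)}(s) + (R⁴/s³)(1 − R⁴/(cts)²)^{n/2−1}·𝟙_{(R²/(ct),R]}(s) ] over (0,r) equals the stated expression. -/

import Mathlib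

open Set MeasureTheory intervalIntegral
open scoped Interval

lemma partAint (a : ℝ) (n : ℕ) (r : ℝ) (hr0 : 0 < r) (hra : r < a) :
    IntervalIntegrable
      (fun x => (n:ℝ) / a ^ 2 * (x * (1 - x ^ 2 / a ^ 2) ^ ((n:ℝ)/2 - 1))) volume 0 r := by
  have ha : 0 < a := hr0.trans hra
  have hbase : ∀ x ∈ uIcc (0:ℝ) r, 0 < 1 - x ^ 2 / a ^ 2 := by
    intro x hx
    rw [uIcc_of_le hr0.le, mem_Icc] at hx
    rw [sub_pos, div_lt_one (by positivity)]
    nlinarith [hx.1, hx.2]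
  apply ContinuousOn.intervalIntegrable
  refine continuousOn_const.mul (continuousOn_id.mul (ContinuousOn.rpow_const ?_ ?_))
  · fun_prop (disch := positivity)
  · exact fun x hx => Or.inl (hbase x hx).ne'


lemma partA (a : ℝ) (n : ℕ) (r : ℝ) (hr0 : 0 < r) (hra : r < a) :
    ∫ s in (0:ℝ)..r, (n:ℝ) / a ^ 2 * (s * (1 - s ^ 2 / a ^ 2) ^ ((n:ℝ)/2 - 1)) =
      1 - (1 - r ^ 2 / a ^ 2) ^ ((n:ℝ)/2) := by
  have ha : 0 < a := hr0.trans hra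
  have hbase : ∀ x ∈ uIcc (0:ℝ) r, 0 < 1 - x ^ 2 / a ^ 2 := by
    intro x hx
    rw [uIcc_of_le hr0.le, mem_Icc] at hx
    rw [sub_pos, div_lt_one (by positivity)]
    nlinarith [hx.1, hx.2]
  have key : ∀ x ∈ uIcc (0:ℝ) r,
      HasDerivAt (fun s => -(1 - s ^ 2 / a ^ 2) ^ ((n:ℝ)/2))
        ((n:ℝ) / a ^ 2 * (x * (1 - x ^ 2 / a ^ 2) ^ ((n:ℝ)/2 - 1))) x := by
    intro x hx
    have hb := hbase x hx
    have h1 : HasDerivAt (fun s : ℝ => 1 - s ^ 2 / a ^ 2) (-(2 * x / a ^ 2)) x := by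
      have h2 : HasDerivAt (fun s : ℝ => s ^ 2 / a ^ 2) (2 * x / a ^ 2) x := by
        simpa using (hasDerivAt_pow 2 x).div_const (a ^ 2)
      simpa using (hasDerivAt_const x (1:ℝ)).fun_sub h2
    have h3 := (h1.rpow_const (p := (n:ℝ)/2) (Or.inl hb.ne')).fun_neg
    refine h3.congr_deriv ?_
    ring
  have hint : IntervalIntegrable
      (fun x => (n:ℝ) / a ^ 2 * (x * (1 - x ^ 2 / a ^ 2) ^ ((n:ℝ)/2 - 1))) volume 0 r := by
    apply ContinuousOn.intervalIntegrable
    refine continuousOn_const.mul (continuousOn_id.mul (ContinuousOn.rpow_const ?_ ?_))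
    · fun_prop (disch := positivity)
    · exact fun x hx => Or.inl (hbase x hx).ne'
  rw [integral_eq_sub_of_hasDerivAt key hint]
  norm_num [Real.one_rpow]
  ring


lemma partBint (s₀ : ℝ) (n : ℕ) (hn : 1 ≤ n) (hs₀ : 0 < s₀) (r : ℝ) (hr : s₀ < r) :
    IntervalIntegrable
      (fun s => (n:ℝ) * s₀ ^ 2 / s ^ 3 * (1 - s₀ ^ 2 / s ^ 2) ^ ((n:ℝ)/2 - 1))
      volume s₀ r := by
  rcases le_or_gt 2 n with h2 | h2
  · -- exponent ≥ 0 : continuous on the closed interval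
    apply ContinuousOn.intervalIntegrable
    have hne : ∀ x ∈ uIcc s₀ r, x ≠ 0 := by
      intro x hx
      rw [uIcc_of_le hr.le, mem_Icc] at hx
      exact (lt_of_lt_of_le hs₀ hx.1).ne'
    refine ContinuousOn.mul ?_ (ContinuousOn.rpow_const ?_ ?_)
    · exact continuousOn_const.div (continuousOn_pow 3) (fun x hx => pow_ne_zero _ (hne x hx))
    · exact continuousOn_const.sub (continuousOn_const.div (continuousOn_pow 2)
        (fun x hx => pow_ne_zero _ (hne x hx)))
    · intro x hx
      right
      have : (2:ℝ) ≤ (n:ℝ) := by exact_mod_cast h2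
      linarith
  · -- n = 1 : compare with a constant times (s - s₀)^(-1/2)
    interval_cases n
    suffices h : IntervalIntegrable
        (fun s : ℝ => s₀ ^ 2 / s ^ 3 * (1 - s₀ ^ 2 / s ^ 2) ^ (-(1/2):ℝ)) volume s₀ r by
      apply h.congr_ae
      refine ae_of_all _ fun s => ?_
      norm_num
    have hr0 : 0 < r := hs₀.trans hr
    set C : ℝ := 2 * s₀ / r ^ 2 with hC
    have hCpos : 0 < C := by positivity
    have hmaj : IntervalIntegrable
        (fun s : ℝ => C ^ (-(1/2):ℝ) / s₀ * (s - s₀) ^ (-(1/2):ℝ)) volume s₀ r := by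
      have h1 : IntervalIntegrable (fun s : ℝ => (s:ℝ) ^ (-(1/2):ℝ)) volume 0 (r - s₀) :=
        intervalIntegrable_rpow' (by norm_num)
      have h2 := (h1.comp_sub_right s₀).const_mul (C ^ (-(1/2):ℝ) / s₀)
      simpa using h2
    refine hmaj.mono_fun ?_ ?_
    · rw [uIoc_of_le hr.le]
      apply ContinuousOn.aestronglyMeasurable _ measurableSet_Ioc
      have hne : ∀ x ∈ Ioc s₀ r, 0 < 1 - s₀ ^ 2 / x ^ 2 := by
        intro x hx
        have hx0 : 0 < x := hs₀.trans hx.1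
        rw [sub_pos, div_lt_one (by positivity)]
        nlinarith [hx.1]
      refine ContinuousOn.mul ?_ (ContinuousOn.rpow_const ?_ ?_)
      · exact continuousOn_const.div (continuousOn_pow 3)
          (fun x hx => pow_ne_zero _ (hs₀.trans hx.1).ne')
      · exact continuousOn_const.sub (continuousOn_const.div (continuousOn_pow 2)
          (fun x hx => pow_ne_zero _ (hs₀.trans hx.1).ne'))
      · exact fun x hx => Or.inl (hne x hx).ne'
    · rw [uIoc_of_le hr.le]
      refine (ae_restrict_iff' measurableSet_Ioc).mpr (ae_of_all _ ?_)
      intro s hs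
      simp only [Real.norm_eq_abs]
      have hs0 : 0 < s := hs₀.trans hs.1
      have hss : 0 < s - s₀ := sub_pos.mpr hs.1
      have hb : 0 < 1 - s₀ ^ 2 / s ^ 2 := by
        rw [sub_pos, div_lt_one (by positivity)]
        nlinarith [hs.1]
      have hlow : C * (s - s₀) ≤ 1 - s₀ ^ 2 / s ^ 2 := by
        have e0 : 1 - s₀ ^ 2 / s ^ 2 = (s ^ 2 - s₀ ^ 2) / s ^ 2 := by field_simp
        rw [e0, hC, div_mul_eq_mul_div, div_le_div_iff₀ (by positivity) (by positivity)]
        have e2 : s ^ 2 ≤ r ^ 2 := by nlinarith [hs.2]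
        nlinarith [mul_le_mul (show 2 * s₀ * (s - s₀) ≤ s ^ 2 - s₀ ^ 2 by nlinarith)
          e2 (by positivity) (by nlinarith)]
      have h4 : (1 - s₀ ^ 2 / s ^ 2) ^ (-(1/2):ℝ) ≤ C ^ (-(1/2):ℝ) * (s - s₀) ^ (-(1/2):ℝ) := by
        rw [← Real.mul_rpow hCpos.le hss.le]
        exact Real.rpow_le_rpow_of_nonpos (by positivity) hlow (by norm_num)
      have h5 : s₀ ^ 2 / s ^ 3 ≤ 1 / s₀ := by
        rw [div_le_div_iff₀ (by positivity) hs₀]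
        nlinarith [pow_le_pow_left₀ hs₀.le hs.1.le 3]
      have hg0 : 0 ≤ s₀ ^ 2 / s ^ 3 * (1 - s₀ ^ 2 / s ^ 2) ^ (-(1/2):ℝ) := by positivity
      have hm0 : 0 ≤ C ^ (-(1/2):ℝ) / s₀ * (s - s₀) ^ (-(1/2):ℝ) := by positivity
      rw [abs_of_nonneg hg0, abs_of_nonneg hm0]
      calc s₀ ^ 2 / s ^ 3 * (1 - s₀ ^ 2 / s ^ 2) ^ (-(1/2):ℝ)
          ≤ 1 / s₀ * (C ^ (-(1/2):ℝ) * (s - s₀) ^ (-(1/2):ℝ)) :=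
            mul_le_mul h5 h4 (by positivity) (by positivity)
        _ = C ^ (-(1/2):ℝ) / s₀ * (s - s₀) ^ (-(1/2):ℝ) := by ring

lemma partB (s₀ : ℝ) (n : ℕ) (hn : 1 ≤ n) (hs₀ : 0 < s₀) (r : ℝ) (hr : s₀ < r) :
    ∫ s in s₀..r, (n:ℝ) * s₀ ^ 2 / s ^ 3 * (1 - s₀ ^ 2 / s ^ 2) ^ ((n:ℝ)/2 - 1) =
      (1 - s₀ ^ 2 / r ^ 2) ^ ((n:ℝ)/2) := by
  have hcont : ContinuousOn (fun s : ℝ => (1 - s₀ ^ 2 / s ^ 2) ^ ((n:ℝ)/2)) (Icc s₀ r) := by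
    refine ContinuousOn.rpow_const ?_ ?_
    · exact continuousOn_const.sub (continuousOn_const.div (continuousOn_pow 2)
        (fun x hx => pow_ne_zero _ (lt_of_lt_of_le hs₀ hx.1).ne'))
    · intro x hx; right; positivity
  have hderiv : ∀ x ∈ Ioo s₀ r,
      HasDerivWithinAt (fun s : ℝ => (1 - s₀ ^ 2 / s ^ 2) ^ ((n:ℝ)/2))
        ((n:ℝ) * s₀ ^ 2 / x ^ 3 * (1 - s₀ ^ 2 / x ^ 2) ^ ((n:ℝ)/2 - 1)) (Ioi x) x := by
    intro x hx
    have hx0 : 0 < x := hs₀.trans hx.1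
    have hb : 0 < 1 - s₀ ^ 2 / x ^ 2 := by
      rw [sub_pos, div_lt_one (by positivity)]
      nlinarith [hx.1]
    have h1 : HasDerivAt (fun s : ℝ => 1 - s₀ ^ 2 / s ^ 2) (2 * s₀ ^ 2 / x ^ 3) x := by
      have h2 : HasDerivAt (fun s : ℝ => s₀ ^ 2 / s ^ 2)
          ((0 * x ^ 2 - s₀ ^ 2 * (2 * x ^ 1)) / (x ^ 2) ^ 2) x :=
        (hasDerivAt_const x (s₀ ^ 2)).div (hasDerivAt_pow 2 x) (by positivity)
      have h3 := (hasDerivAt_const x (1:ℝ)).fun_sub h2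
      refine h3.congr_deriv ?_
      field_simp
      ring
    have h4 := h1.rpow_const (p := (n:ℝ)/2) (Or.inl hb.ne')
    refine HasDerivAt.hasDerivWithinAt ?_
    refine h4.congr_deriv ?_
    ring
  rw [integral_eq_sub_of_hasDeriv_right_of_le hr.le hcont hderiv (partBint s₀ n hn hs₀ r hr)]
  have : 1 - s₀ ^ 2 / s₀ ^ 2 = 0 := by
    field_simp
    ring
  rw [this, Real.zero_rpow]
  · ring
  · have : (1:ℝ) ≤ (n:ℝ) := by exact_mod_cast hn
    positivity



theorem planar_reflected_distance_distribution
    (c R t : ℝ) (n : ℕ) (hc : 0 < c) (hR : 0 < R) (ht : R / c < t) (hn : 1 ≤ n)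
    (r : ℝ) (hr0 : 0 < r) (hrR : r ≤ R)
    (q : ℝ → ℝ)
    (hq : ∀ s, q s = (n : ℝ) / (c * t) ^ 2 *
      ((if 0 < s ∧ s < R then s * (1 - s ^ 2 / (c * t) ^ 2) ^ ((n : ℝ) / 2 - 1) else 0) +
       (if R ^ 2 / (c * t) < s ∧ s ≤ R then
          (R ^ 4 / s ^ 3) * (1 - R ^ 4 / (c * t * s) ^ 2) ^ ((n : ℝ) / 2 - 1) else 0))) :
    ∫ s in (0 : ℝ)..r, q s =
      1 - (1 - r ^ 2 / (c * t) ^ 2) ^ ((n : ℝ) / 2) +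
        (if R ^ 2 / (c * t) < r ∧ r ≤ R then
          (1 - R ^ 4 / (c * t * r) ^ 2) ^ ((n : ℝ) / 2) else 0) := by
  have ht0 : 0 < t := lt_trans (by positivity) ht
  have ha : 0 < c * t := by positivity
  have hRa : R < c * t := by
    rw [div_lt_iff₀ hc] at ht
    nlinarith
  have hra : r < c * t := lt_of_le_of_lt hrR hRa
  set s₀ : ℝ := R ^ 2 / (c * t) with hs₀def
  have hs₀pos : 0 < s₀ := div_pos (by positivity) ha
  have hs₀R : s₀ < R := by
    rw [hs₀def, div_lt_iff₀ ha]
    nlinarith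
  have hbase2 : ∀ x : ℝ, x ≠ 0 → R ^ 4 / (c * t * x) ^ 2 = s₀ ^ 2 / x ^ 2 := by
    intro x hx
    rw [hs₀def]
    field_simp
  -- split the integrand
  simp_rw [hq, mul_add]
  have hAeq : ∀ᵐ x : ℝ, x ∈ Ι (0:ℝ) r →
      ((n : ℝ) / (c * t) ^ 2 *
        if 0 < x ∧ x < R then x * (1 - x ^ 2 / (c * t) ^ 2) ^ ((n : ℝ) / 2 - 1) else 0) =
      (n : ℝ) / (c * t) ^ 2 * (x * (1 - x ^ 2 / (c * t) ^ 2) ^ ((n : ℝ) / 2 - 1)) := by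
    have hRne : ∀ᵐ x : ℝ, x ≠ R := by
      rw [ae_iff]
      simp only [not_not, setOf_eq_eq_singleton]
      exact measure_singleton R
    filter_upwards [hRne] with x hx hmem
    rw [uIoc_of_le hr0.le, mem_Ioc] at hmem
    rw [if_pos ⟨hmem.1, lt_of_le_of_ne (hmem.2.trans hrR) hx⟩]
  have hAint : IntervalIntegrable
      (fun x => (n : ℝ) / (c * t) ^ 2 *
        if 0 < x ∧ x < R then x * (1 - x ^ 2 / (c * t) ^ 2) ^ ((n : ℝ) / 2 - 1) else 0)
      volume 0 r := by
    refine (partAint (c * t) n r hr0 hra).congr_ae ?_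
    rw [Filter.eventuallyEq_comm]
    exact (ae_restrict_iff' measurableSet_uIoc).mpr hAeq
  have hAval : (∫ x in (0:ℝ)..r, (n : ℝ) / (c * t) ^ 2 *
        if 0 < x ∧ x < R then x * (1 - x ^ 2 / (c * t) ^ 2) ^ ((n : ℝ) / 2 - 1) else 0) =
      1 - (1 - r ^ 2 / (c * t) ^ 2) ^ ((n : ℝ) / 2) := by
    rw [integral_congr_ae hAeq, partA (c * t) n r hr0 hra]
  rcases le_or_gt r s₀ with hcase | hcase
  · -- the reflected term vanishes
    have hBzero : ∀ x ∈ Ι (0:ℝ) r,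
        ((n : ℝ) / (c * t) ^ 2 *
          if s₀ < x ∧ x ≤ R then
            (R ^ 4 / x ^ 3) * (1 - R ^ 4 / (c * t * x) ^ 2) ^ ((n : ℝ) / 2 - 1) else 0) = 0 := by
      intro x hx
      rw [uIoc_of_le hr0.le, mem_Ioc] at hx
      rw [if_neg (fun h => absurd h.1 (not_lt.mpr (hx.2.trans hcase))), mul_zero]
    have hBint : IntervalIntegrable
        (fun x => (n : ℝ) / (c * t) ^ 2 *
          if s₀ < x ∧ x ≤ R then
            (R ^ 4 / x ^ 3) * (1 - R ^ 4 / (c * t * x) ^ 2) ^ ((n : ℝ) / 2 - 1) else 0)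
        volume 0 r := by
      refine (_root_.intervalIntegrable_const (c := (0:ℝ))).congr_ae ?_
      exact (ae_restrict_iff' measurableSet_uIoc).mpr (ae_of_all _ fun x hx => (hBzero x hx).symm)
    rw [integral_add hAint hBint, hAval,
      integral_congr_ae (g := fun _ => (0:ℝ)) (ae_of_all _ hBzero),
      intervalIntegral.integral_zero,
      if_neg (fun h : s₀ < r ∧ r ≤ R => absurd h.1 (not_lt.mpr hcase))]
  · -- the reflected term contributes
    have hupper_eq : ∀ x ∈ Ι s₀ r,
        ((n : ℝ) / (c * t) ^ 2 *
          if s₀ < x ∧ x ≤ R then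
            (R ^ 4 / x ^ 3) * (1 - R ^ 4 / (c * t * x) ^ 2) ^ ((n : ℝ) / 2 - 1) else 0) =
        (n : ℝ) * s₀ ^ 2 / x ^ 3 * (1 - s₀ ^ 2 / x ^ 2) ^ ((n : ℝ) / 2 - 1) := by
      intro x hx
      rw [uIoc_of_le hcase.le, mem_Ioc] at hx
      have hx0 : 0 < x := hs₀pos.trans hx.1
      rw [if_pos ⟨hx.1, hx.2.trans hrR⟩, hbase2 x hx0.ne', hs₀def]
      field_simp
    have hBupper_int : IntervalIntegrable
        (fun x => (n : ℝ) / (c * t) ^ 2 *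
          if s₀ < x ∧ x ≤ R then
            (R ^ 4 / x ^ 3) * (1 - R ^ 4 / (c * t * x) ^ 2) ^ ((n : ℝ) / 2 - 1) else 0)
        volume s₀ r := by
      refine (partBint s₀ n hn hs₀pos r hcase).congr_ae ?_
      exact (ae_restrict_iff' measurableSet_uIoc).mpr
        (ae_of_all _ fun x hx => (hupper_eq x hx).symm)
    have hBlower : ∀ x ∈ Ι (0:ℝ) s₀,
        ((n : ℝ) / (c * t) ^ 2 *
          if s₀ < x ∧ x ≤ R then
            (R ^ 4 / x ^ 3) * (1 - R ^ 4 / (c * t * x) ^ 2) ^ ((n : ℝ) / 2 - 1) else 0) = 0 := by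
      intro x hx
      rw [uIoc_of_le hs₀pos.le, mem_Ioc] at hx
      rw [if_neg (fun h => absurd h.1 (not_lt.mpr hx.2)), mul_zero]
    have hBlower_int : IntervalIntegrable
        (fun x => (n : ℝ) / (c * t) ^ 2 *
          if s₀ < x ∧ x ≤ R then
            (R ^ 4 / x ^ 3) * (1 - R ^ 4 / (c * t * x) ^ 2) ^ ((n : ℝ) / 2 - 1) else 0)
        volume 0 s₀ := by
      refine (_root_.intervalIntegrable_const (c := (0:ℝ))).congr_ae ?_
      exact (ae_restrict_iff' measurableSet_uIoc).mpr
        (ae_of_all _ fun x hx => (hBlower x hx).symm)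
    have hBint := hBlower_int.trans hBupper_int
    have hBval : (∫ x in (0:ℝ)..r, (n : ℝ) / (c * t) ^ 2 *
          if s₀ < x ∧ x ≤ R then
            (R ^ 4 / x ^ 3) * (1 - R ^ 4 / (c * t * x) ^ 2) ^ ((n : ℝ) / 2 - 1) else 0) =
        (1 - s₀ ^ 2 / r ^ 2) ^ ((n : ℝ) / 2) := by
      rw [← integral_add_adjacent_intervals hBlower_int hBupper_int,
        integral_congr_ae (g := fun _ => (0:ℝ)) (ae_of_all _ hBlower),
        integral_congr_ae (ae_of_all _ hupper_eq), partB s₀ n hn hs₀pos r hcase,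
        intervalIntegral.integral_zero, zero_add]
    rw [integral_add hAint hBint, hAval, hBval, if_pos ⟨hcase, hrR⟩, hbase2 r hr0.ne']
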